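/- Let X be a topological space and let 𝒪' ≪ 𝒪 be a super-refinement of open covers of X. Then every (𝒪',𝒪)-parent map f: X → 𝒪 induces a well-defined chain map f_*: 𝒞_*(X,𝒪') → C_*(N(𝒪)), given on generators by [x_0,…,x_n] ↦ [f(x_0),…,f(x_n)]; in particular, whenever the set {x_0,…,x_n} is 𝒪'-tiny, one has f(x_0) ∩ … ∩ f(x_n) ≠ ∅. Moreover, for any two (𝒪',𝒪)-parent maps f, g: X → 𝒪, the induced chain maps f_*, g_*: 𝒞_*(X,𝒪') → C_*(N(𝒪)) are chain-homotopic. -/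
import Mathlib

open Finsupp Finset

/-- Prism tuple: `[f x₀,…,f x_j, g x_j,…,g x_n]`. -/
def prism {α β : Type*} (f g : α → β) {n : ℕ} (σ : Fin (n + 1) → α) (j : ℕ) :
    Fin (n + 2) → β :=
  fun i => if (i : ℕ) ≤ j then f (σ ⟨min (i : ℕ) n, by omega⟩)
    else g (σ ⟨(i : ℕ) - 1, by have := i.2; omega⟩)

/-- Face with a natural-number index (total in `i`). -/
def natFace {β : Type*} {n : ℕ} (i : ℕ) (τ : Fin (n + 1) → β) : Fin n → β :=
  fun k => τ (if (k : ℕ) < i then k.castSucc else k.succ)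

lemma comp_succAbove_eq_natFace {β : Type*} {n : ℕ} (i : Fin (n + 1)) (τ : Fin (n + 1) → β) :
    τ ∘ i.succAbove = natFace (i : ℕ) τ := by
  funext k
  simp [natFace, Fin.succAbove, Fin.lt_def]

lemma natFace_eq_of_lt {β : Type*} {n : ℕ} {i : ℕ} (τ : Fin (n + 1) → β) {k : Fin n}
    (h : (k : ℕ) < i) (t : Fin (n + 1)) (ht : (t : ℕ) = (k : ℕ)) :
    natFace i τ k = τ t := by
  unfold natFace
  rw [if_pos h]
  exact congrArg τ (Fin.ext (by simp [ht]))

lemma natFace_eq_of_ge {β : Type*} {n : ℕ} {i : ℕ} (τ : Fin (n + 1) → β) {k : Fin n}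
    (h : i ≤ (k : ℕ)) (t : Fin (n + 1)) (ht : (t : ℕ) = (k : ℕ) + 1) :
    natFace i τ k = τ t := by
  unfold natFace
  rw [if_neg (by omega)]
  exact congrArg τ (Fin.ext (by simp [ht]))

lemma prism_eq_of_le {α β : Type*} (f g : α → β) {n : ℕ} (σ : Fin (n + 1) → α) {j : ℕ}
    {i : Fin (n + 2)} (h : (i : ℕ) ≤ j) (t : Fin (n + 1)) (ht : (t : ℕ) = (i : ℕ)) :
    prism f g σ j i = f (σ t) := by
  unfold prism
  rw [if_pos h]
  refine congrArg f (congrArg σ (Fin.ext ?_))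
  have := t.2
  show min (i : ℕ) n = (t : ℕ)
  omega

lemma prism_eq_of_gt {α β : Type*} (f g : α → β) {n : ℕ} (σ : Fin (n + 1) → α) {j : ℕ}
    {i : Fin (n + 2)} (h : j < (i : ℕ)) (t : Fin (n + 1)) (ht : (t : ℕ) = (i : ℕ) - 1) :
    prism f g σ j i = g (σ t) := by
  unfold prism
  rw [if_neg (by omega)]
  refine congrArg g (congrArg σ (Fin.ext ?_))
  show (i : ℕ) - 1 = (t : ℕ)
  omega

/-- L1: `∂ᵢ Pⱼ = P_{j-1} ∂ᵢ` for `i < j`. -/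
lemma natFace_prism_lt {α β : Type*} (f g : α → β) {n : ℕ} (σ : Fin (n + 2) → α)
    {i j : ℕ} (hij : i < j) (hj : j ≤ n + 1) :
    natFace i (prism f g σ j) = prism f g (natFace i σ) (j - 1) := by
  funext k
  by_cases h1 : (k : ℕ) < i
  · rw [natFace_eq_of_lt _ h1 ⟨(k : ℕ), by omega⟩ rfl,
      prism_eq_of_le f g σ (by simp; omega) ⟨(k : ℕ), by omega⟩ rfl,
      prism_eq_of_le f g _ (by omega) ⟨(k : ℕ), by omega⟩ rfl,
      natFace_eq_of_lt σ (by simp; omega) ⟨(k : ℕ), by omega⟩ rfl]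
  · by_cases h2 : (k : ℕ) < j
    · rw [natFace_eq_of_ge _ (by omega) ⟨(k : ℕ) + 1, by omega⟩ rfl,
        prism_eq_of_le f g σ (by simp; omega) ⟨(k : ℕ) + 1, by omega⟩ rfl,
        prism_eq_of_le f g _ (by omega) ⟨(k : ℕ), by omega⟩ rfl,
        natFace_eq_of_ge σ (by simp; omega) ⟨(k : ℕ) + 1, by omega⟩ (by simp)]
    · rw [natFace_eq_of_ge _ (by omega) ⟨(k : ℕ) + 1, by omega⟩ rfl,
        prism_eq_of_gt f g σ (by simp; omega) ⟨(k : ℕ), by omega⟩ (by simp),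
        prism_eq_of_gt f g _ (by omega) ⟨(k : ℕ) - 1, by omega⟩ rfl,
        natFace_eq_of_ge σ (by simp; omega) ⟨(k : ℕ), by omega⟩ (by simp; omega)]

/-- L2: `∂ᵢ Pⱼ = Pⱼ ∂_{i-1}` for `i > j + 1`. -/
lemma natFace_prism_gt {α β : Type*} (f g : α → β) {n : ℕ} (σ : Fin (n + 2) → α)
    {i j : ℕ} (hij : j + 1 < i) (hi : i ≤ n + 2) :
    natFace i (prism f g σ j) = prism f g (natFace (i - 1) σ) j := by
  funext k
  by_cases h1 : (k : ℕ) ≤ j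
  · rw [natFace_eq_of_lt _ (by omega) ⟨(k : ℕ), by omega⟩ rfl,
      prism_eq_of_le f g σ (by simp; omega) ⟨(k : ℕ), by omega⟩ rfl,
      prism_eq_of_le f g _ (by omega) ⟨(k : ℕ), by omega⟩ rfl,
      natFace_eq_of_lt σ (by simp; omega) ⟨(k : ℕ), by omega⟩ rfl]
  · by_cases h2 : (k : ℕ) < i
    · rw [natFace_eq_of_lt _ h2 ⟨(k : ℕ), by omega⟩ rfl,
        prism_eq_of_gt f g σ (by simp; omega) ⟨(k : ℕ) - 1, by omega⟩ (by simp),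
        prism_eq_of_gt f g _ (by omega) ⟨(k : ℕ) - 1, by omega⟩ rfl,
        natFace_eq_of_lt σ (by simp; omega) ⟨(k : ℕ) - 1, by omega⟩ rfl]
    · rw [natFace_eq_of_ge _ (by omega) ⟨(k : ℕ) + 1, by omega⟩ rfl,
        prism_eq_of_gt f g σ (by simp; omega) ⟨(k : ℕ), by omega⟩ (by simp),
        prism_eq_of_gt f g _ (by omega) ⟨(k : ℕ) - 1, by omega⟩ rfl,
        natFace_eq_of_ge σ (by simp; omega) ⟨(k : ℕ), by omega⟩ (by simp; omega)]

/-- L3: `∂_{j+1} Pⱼ = ∂_{j+1} P_{j+1}` (telescoping). -/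
lemma natFace_prism_diag {α β : Type*} (f g : α → β) {n : ℕ} (σ : Fin (n + 1) → α)
    {j : ℕ} (hj : j ≤ n) :
    natFace (j + 1) (prism f g σ j) = natFace (j + 1) (prism f g σ (j + 1)) := by
  funext k
  by_cases h1 : (k : ℕ) ≤ j
  · rw [natFace_eq_of_lt _ (by omega) ⟨(k : ℕ), by omega⟩ rfl,
      natFace_eq_of_lt _ (by omega) ⟨(k : ℕ), by omega⟩ rfl,
      prism_eq_of_le f g σ (by simp; omega) ⟨(k : ℕ), by omega⟩ rfl,
      prism_eq_of_le f g σ (by simp; omega) ⟨(k : ℕ), by omega⟩ rfl]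
  · rw [natFace_eq_of_ge _ (by omega) ⟨(k : ℕ) + 1, by omega⟩ rfl,
      natFace_eq_of_ge _ (by omega) ⟨(k : ℕ) + 1, by omega⟩ rfl,
      prism_eq_of_gt f g σ (by simp; omega) ⟨(k : ℕ), by omega⟩ (by simp),
      prism_eq_of_gt f g σ (by simp; omega) ⟨(k : ℕ), by omega⟩ (by simp)]

/-- L4: `∂₀ P₀ = g`. -/
lemma natFace_prism_zero {α β : Type*} (f g : α → β) {n : ℕ} (σ : Fin (n + 1) → α) :
    natFace 0 (prism f g σ 0) = g ∘ σ := by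
  funext k
  rw [Function.comp_apply, natFace_eq_of_ge _ (by omega) ⟨(k : ℕ) + 1, by omega⟩ rfl,
    prism_eq_of_gt f g σ (by simp) k (by simp)]

/-- L5: `∂_{n+1} Pⱼ = f` for `j ≥ n`. -/
lemma natFace_prism_last {α β : Type*} (f g : α → β) {n : ℕ} (σ : Fin (n + 1) → α)
    {j : ℕ} (hj : n ≤ j) :
    natFace (n + 1) (prism f g σ j) = f ∘ σ := by
  funext k
  rw [Function.comp_apply, natFace_eq_of_lt _ (by omega) ⟨(k : ℕ), by omega⟩ rfl,
    prism_eq_of_le f g σ (by simp; omega) k (by simp)]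

lemma prism_cancel {M : Type*} [AddCommGroup M] (m : ℕ) (S T : ℕ → ℕ → M)
    (h1 : ∀ i j, i < j → j ≤ m + 1 → S i j = T i (j - 1))
    (h2 : ∀ i j, j + 1 < i → i ≤ m + 2 → j ≤ m + 1 → S i j = T (i - 1) j)
    (h3 : ∀ j, j ≤ m + 1 → S (j + 1) j = S (j + 1) (j + 1)) :
    (∑ i ∈ range (m + 3), ∑ j ∈ range (m + 2), ((-1 : ℤ) ^ (i + j)) • S i j)
      + ∑ k ∈ range (m + 2), ∑ j ∈ range (m + 1), ((-1 : ℤ) ^ (k + j)) • T k j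
    = S 0 0 - S (m + 2) (m + 2) := by
  classical
  set F : ℕ × ℕ → M := fun p => ((-1 : ℤ) ^ (p.1 + p.2)) • S p.1 p.2 with hF
  set G : ℕ × ℕ → M := fun p => ((-1 : ℤ) ^ (p.1 + p.2)) • T p.1 p.2 with hG
  have e1 : (∑ i ∈ range (m + 3), ∑ j ∈ range (m + 2), ((-1 : ℤ) ^ (i + j)) • S i j)
      = ∑ p ∈ (range (m + 3)) ×ˢ (range (m + 2)), F p := (Finset.sum_product (range (m + 3)) (range (m + 2)) F).symm
  have e2 : (∑ k ∈ range (m + 2), ∑ j ∈ range (m + 1), ((-1 : ℤ) ^ (k + j)) • T k j)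
      = ∑ p ∈ (range (m + 2)) ×ˢ (range (m + 1)), G p := (Finset.sum_product (range (m + 2)) (range (m + 1)) G).symm
  rw [e1, e2]
  set R1 : Finset (ℕ × ℕ) := (range (m + 3)) ×ˢ (range (m + 2)) with hR1
  set R2 : Finset (ℕ × ℕ) := (range (m + 2)) ×ˢ (range (m + 1)) with hR2
  rw [← Finset.sum_filter_add_sum_filter_not R1 (fun p => p.1 < p.2) F,
    ← Finset.sum_filter_add_sum_filter_not (R1.filter (fun p => ¬ p.1 < p.2))
      (fun p => p.1 = p.2) F,
    ← Finset.sum_filter_add_sum_filter_not ((R1.filter (fun p => ¬ p.1 < p.2)).filter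
      (fun p => ¬ p.1 = p.2)) (fun p => p.1 = p.2 + 1) F,
    ← Finset.sum_filter_add_sum_filter_not R2 (fun p => p.1 ≤ p.2) G]
  have hA : ∑ p ∈ R1.filter (fun p => p.1 < p.2), F p
      = - ∑ p ∈ R2.filter (fun p => p.1 ≤ p.2), G p := by
    rw [← Finset.sum_neg_distrib]
    refine Finset.sum_nbij' (fun p => (p.1, p.2 - 1)) (fun p => (p.1, p.2 + 1)) ?_ ?_ ?_ ?_ ?_
    · intro p hp
      simp only [hR1, hR2, mem_filter, mem_product, mem_range] at hp ⊢
      omega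
    · intro p hp
      simp only [hR1, hR2, mem_filter, mem_product, mem_range] at hp ⊢
      omega
    · intro p hp
      simp only [hR1, mem_filter, mem_product, mem_range] at hp
      have : p.2 - 1 + 1 = p.2 := by omega
      simp [this]
    · intro p hp
      simp
    · intro p hp
      simp only [hR1, mem_filter, mem_product, mem_range] at hp
      obtain ⟨⟨hp1, hp2⟩, hlt⟩ := hp
      show F p = -(G (p.1, p.2 - 1))
      rw [hF, hG]
      simp only []
      rw [h1 p.1 p.2 hlt (by omega)]
      have hpow : p.1 + p.2 = (p.1 + (p.2 - 1)) + 1 := by omega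
      rw [hpow, pow_succ, mul_neg_one, neg_smul]
  have hB : ∑ p ∈ ((R1.filter (fun p => ¬ p.1 < p.2)).filter (fun p => ¬ p.1 = p.2)).filter
        (fun p => ¬ p.1 = p.2 + 1), F p
      = - ∑ p ∈ R2.filter (fun p => ¬ p.1 ≤ p.2), G p := by
    rw [← Finset.sum_neg_distrib]
    refine Finset.sum_nbij' (fun p => (p.1 - 1, p.2)) (fun p => (p.1 + 1, p.2)) ?_ ?_ ?_ ?_ ?_
    · intro p hp
      simp only [hR1, hR2, mem_filter, mem_product, mem_range] at hp ⊢
      omega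
    · intro p hp
      simp only [hR1, hR2, mem_filter, mem_product, mem_range] at hp ⊢
      omega
    · intro p hp
      simp only [hR1, mem_filter, mem_product, mem_range] at hp
      have : p.1 - 1 + 1 = p.1 := by omega
      simp [this]
    · intro p hp
      simp
    · intro p hp
      simp only [hR1, mem_filter, mem_product, mem_range] at hp
      obtain ⟨⟨⟨⟨hp1, hp2⟩, hq1⟩, hq2⟩, hq3⟩ := hp
      show F p = -(G (p.1 - 1, p.2))
      rw [hF, hG]
      simp only []
      rw [h2 p.1 p.2 (by omega) (by omega) (by omega)]
      have hpow : p.1 + p.2 = ((p.1 - 1) + p.2) + 1 := by omega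
      rw [hpow, pow_succ, mul_neg_one, neg_smul]
  have hD1 : ∑ p ∈ (R1.filter (fun p => ¬ p.1 < p.2)).filter (fun p => p.1 = p.2), F p
      = ∑ j ∈ range (m + 2), S j j := by
    refine Finset.sum_nbij' (fun p => p.1) (fun j => (j, j)) ?_ ?_ ?_ ?_ ?_
    · intro p hp
      simp only [hR1, mem_filter, mem_product, mem_range] at hp ⊢
      omega
    · intro j hj
      simp only [hR1, mem_filter, mem_product, mem_range, and_true] at hj ⊢
      omega
    · intro p hp
      simp only [hR1, mem_filter, mem_product, mem_range] at hp
      exact Prod.ext rfl hp.2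
    · intro j hj
      rfl
    · intro p hp
      simp only [hR1, mem_filter, mem_product, mem_range] at hp
      obtain ⟨⟨hp1, hq1⟩, hq2⟩ := hp
      show F p = S p.1 p.1
      rw [hF]
      simp only []
      rw [← hq2]
      rw [Even.neg_one_pow ⟨p.1, by ring⟩, one_smul]
  have hD2 : ∑ p ∈ ((R1.filter (fun p => ¬ p.1 < p.2)).filter (fun p => ¬ p.1 = p.2)).filter
        (fun p => p.1 = p.2 + 1), F p
      = ∑ j ∈ range (m + 2), (- S (j + 1) (j + 1)) := by
    refine Finset.sum_nbij' (fun p => p.2) (fun j => (j + 1, j)) ?_ ?_ ?_ ?_ ?_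
    · intro p hp
      simp only [hR1, mem_filter, mem_product, mem_range] at hp ⊢
      omega
    · intro j hj
      simp only [hR1, mem_filter, mem_product, mem_range, and_true] at hj ⊢
      omega
    · intro p hp
      simp only [hR1, mem_filter, mem_product, mem_range] at hp
      exact Prod.ext hp.2.symm rfl
    · intro j hj
      rfl
    · intro p hp
      simp only [hR1, mem_filter, mem_product, mem_range] at hp
      obtain ⟨⟨⟨⟨hp1, hp2⟩, hq1⟩, hq2⟩, hq3⟩ := hp
      show F p = - S (p.2 + 1) (p.2 + 1)
      rw [hF]
      simp only []
      rw [hq3, ← h3 p.2 (by omega)]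
      rw [Odd.neg_one_pow ⟨p.2, by ring⟩, neg_one_smul]
  have htel : (∑ j ∈ range (m + 2), S j j) + (∑ j ∈ range (m + 2), (- S (j + 1) (j + 1)))
      = S 0 0 - S (m + 2) (m + 2) := by
    rw [← Finset.sum_add_distrib]
    have : ∀ j ∈ range (m + 2), S j j + (- S (j + 1) (j + 1))
        = (fun j => S j j) j - (fun j => S j j) (j + 1) := by
      intro j _
      simp [sub_eq_add_neg]
    rw [Finset.sum_congr rfl this, Finset.sum_range_sub' (fun j => S j j) (m + 2)]
  rw [hA, hB, hD1, hD2, ← htel]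
  abel

/-- A variant of `prism_cancel` with the first double sum in transposed form. -/
lemma prism_cancel' {M : Type*} [AddCommGroup M] (m : ℕ) (S T : ℕ → ℕ → M)
    (h1 : ∀ i j, i < j → j ≤ m + 1 → S i j = T i (j - 1))
    (h2 : ∀ i j, j + 1 < i → i ≤ m + 2 → j ≤ m + 1 → S i j = T (i - 1) j)
    (h3 : ∀ j, j ≤ m + 1 → S (j + 1) j = S (j + 1) (j + 1)) :
    (∑ j ∈ range (m + 2), ∑ i ∈ range (m + 3), ((-1 : ℤ) ^ (j + i)) • S i j)
      + ∑ k ∈ range (m + 2), ∑ j ∈ range (m + 1), ((-1 : ℤ) ^ (k + j)) • T k j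
    = S 0 0 - S (m + 2) (m + 2) := by
  have e : (∑ j ∈ range (m + 2), ∑ i ∈ range (m + 3), ((-1 : ℤ) ^ (j + i)) • S i j)
      = ∑ i ∈ range (m + 3), ∑ j ∈ range (m + 2), ((-1 : ℤ) ^ (i + j)) • S i j := by
    rw [Finset.sum_comm]
    exact Finset.sum_congr rfl fun i _ => Finset.sum_congr rfl fun j _ => by rw [Nat.add_comm]
  rw [e]
  exact prism_cancel m S T h1 h2 h3




/-- Discrete chains with `m` vertices: the free `ℤ`-module on ordered `m`-tuples of points. -/
abbrev DChain (α : Type*) (m : ℕ) := (Fin m → α) →₀ ℤ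

/-- The `i`-th face operator on discrete chains, deleting the `i`-th vertex. -/
noncomputable def dface {α : Type*} {m : ℕ} (i : Fin (m + 1)) :
    DChain α (m + 1) →ₗ[ℤ] DChain α m :=
  Finsupp.lmapDomain ℤ ℤ (fun σ => σ ∘ i.succAbove)

/-- The simplicial boundary operator on discrete chains:
`∂[x₀,…,xₙ] = ∑ i, (-1)^i [x₀,…,x̂ᵢ,…,xₙ]`. -/
noncomputable def dbd {α : Type*} {m : ℕ} : DChain α (m + 1) →ₗ[ℤ] DChain α m :=
  ∑ i : Fin (m + 1), ((-1 : ℤ) ^ (i : ℕ)) • dface i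

/-- The chain map induced by a map on vertices. -/
noncomputable def vmap {α β : Type*} (f : α → β) {m : ℕ} : DChain α m →ₗ[ℤ] DChain β m :=
  Finsupp.lmapDomain ℤ ℤ (fun σ => f ∘ σ)

/-- The support of a discrete chain: the set of vertices appearing in its
cancellation-free expression. -/
def chainSupp {α : Type*} {m : ℕ} (c : DChain α m) : Set α :=
  ⋃ σ ∈ c.support, Set.range σ

/-- An open cover of a topological space. -/
def IsOpenCover {X : Type*} [TopologicalSpace X] (O : Set (Set X)) : Prop :=
  (∀ U ∈ O, IsOpen U) ∧ ⋃₀ O = Set.univ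

/-- `O'` refines `O`: every element of `O'` is contained in some element of `O`. -/
def Refines {X : Type*} (O' O : Set (Set X)) : Prop :=
  ∀ U ∈ O', ∃ V ∈ O, U ⊆ V

/-- `O'` is a super-refinement of `O` (written `O' ≪ O`) if every point `x` has a *parent*:
an element of `O` containing every member of `O'` that contains `x`. -/
def SuperRefines {X : Type*} (O' O : Set (Set X)) : Prop :=
  ∀ x : X, ∃ U ∈ O, ∀ V ∈ O', x ∈ V → V ⊆ U

/-- A subset is `O`-tiny if it is contained in a single element of `O`. -/
def Tiny {X : Type*} (O : Set (Set X)) (A : Set X) : Prop :=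
  ∃ U ∈ O, A ⊆ U

/-- A discrete chain is `O`-fine if each of its simplices is `O`-tiny. -/
def FineChain {X : Type*} (O : Set (Set X)) {m : ℕ} (c : DChain X m) : Prop :=
  ∀ σ ∈ c.support, Tiny O (Set.range σ)

/-- A chain of tuples of sets is a nerve chain of the cover `O` if each of its simplices is a
tuple of elements of `O` with nonempty intersection. -/
def NerveChain {X : Type*} (O : Set (Set X)) {m : ℕ} (c : DChain (Set X) m) : Prop :=
  ∀ τ ∈ c.support, (∀ i, τ i ∈ O) ∧ (⋂ i, τ i).Nonempty


lemma vmap_single {α β : Type*} (f : α → β) {m : ℕ} (σ : Fin m → α) (b : ℤ) :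
    vmap f (Finsupp.single σ b) = Finsupp.single (f ∘ σ) b := by
  rw [vmap, Finsupp.lmapDomain_apply, Finsupp.mapDomain_single]

lemma dbd_single {α : Type*} {m : ℕ} (σ : Fin (m + 1) → α) (b : ℤ) :
    dbd (Finsupp.single σ b)
      = ∑ i ∈ range (m + 1), ((-1 : ℤ) ^ i) • Finsupp.single (natFace i σ) b := by
  rw [dbd, LinearMap.sum_apply,
    ← Fin.sum_univ_eq_sum_range (fun i => ((-1 : ℤ) ^ i) • Finsupp.single (natFace i σ) b)]
  refine Finset.sum_congr rfl fun i _ => ?_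
  rw [LinearMap.smul_apply, dface, Finsupp.lmapDomain_apply, Finsupp.mapDomain_single,
    comp_succAbove_eq_natFace]

lemma natFace_comp {α β : Type*} (h : α → β) {n : ℕ} (i : ℕ) (σ : Fin (n + 1) → α) :
    natFace i (h ∘ σ) = h ∘ natFace i σ := by
  funext k
  rfl

/-- The prism operator, as a linear map on discrete chains. -/
noncomputable def prismMap {α β : Type*} (f g : α → β) (m : ℕ) :
    DChain α (m + 1) →ₗ[ℤ] DChain β (m + 2) :=
  ∑ j ∈ range (m + 1), ((-1 : ℤ) ^ j) • Finsupp.lmapDomain ℤ ℤ (fun σ => prism f g σ j)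

lemma prismMap_single {α β : Type*} (f g : α → β) {m : ℕ} (σ : Fin (m + 1) → α) (b : ℤ) :
    prismMap f g m (Finsupp.single σ b)
      = ∑ j ∈ range (m + 1), ((-1 : ℤ) ^ j) • Finsupp.single (prism f g σ j) b := by
  rw [prismMap, LinearMap.sum_apply]
  refine Finset.sum_congr rfl fun j _ => ?_
  rw [LinearMap.smul_apply, Finsupp.lmapDomain_apply, Finsupp.mapDomain_single]

lemma prism_homotopy_zero {α β : Type*} (f g : α → β) (c : DChain α 1) :
    dbd (prismMap f g 0 c) = vmap g c - vmap f c := by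
  have : (dbd.comp (prismMap f g 0) : DChain α 1 →ₗ[ℤ] DChain β 1)
      = vmap g - vmap f := by
    apply Finsupp.lhom_ext
    intro σ b
    rw [LinearMap.comp_apply, prismMap_single, LinearMap.sub_apply, vmap_single, vmap_single]
    rw [Finset.sum_range_one, pow_zero, one_smul, dbd_single]
    rw [Finset.sum_range_succ, Finset.sum_range_one, pow_zero, pow_one, one_smul, neg_one_smul]
    rw [natFace_prism_zero f g σ, natFace_prism_last f g σ (le_refl 0)]
    rw [sub_eq_add_neg]
  exact LinearMap.congr_fun this c

lemma prism_homotopy {α β : Type*} (f g : α → β) (m : ℕ) (c : DChain α (m + 2)) :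
    dbd (prismMap f g (m + 1) c) + prismMap f g m (dbd c) = vmap g c - vmap f c := by
  have key : (dbd.comp (prismMap f g (m + 1)) + (prismMap f g m).comp dbd :
      DChain α (m + 2) →ₗ[ℤ] DChain β (m + 2)) = vmap g - vmap f := by
    apply Finsupp.lhom_ext
    intro σ b
    rw [LinearMap.add_apply, LinearMap.comp_apply, LinearMap.comp_apply,
      LinearMap.sub_apply, vmap_single, vmap_single]
    have eA : dbd (prismMap f g (m + 1) (Finsupp.single σ b))
        = ∑ j ∈ range (m + 2), ∑ i ∈ range (m + 3),
            ((-1 : ℤ) ^ (j + i)) • Finsupp.single (natFace i (prism f g σ j)) b := by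
      rw [prismMap_single, map_sum]
      refine Finset.sum_congr rfl fun j _ => ?_
      rw [map_smul, dbd_single, Finset.smul_sum]
      refine Finset.sum_congr rfl fun i _ => ?_
      rw [smul_smul, ← pow_add]
    have eB : prismMap f g m (dbd (Finsupp.single σ b))
        = ∑ k ∈ range (m + 2), ∑ j ∈ range (m + 1),
            ((-1 : ℤ) ^ (k + j)) • Finsupp.single (prism f g (natFace k σ) j) b := by
      rw [dbd_single, map_sum]
      refine Finset.sum_congr rfl fun k _ => ?_
      rw [map_smul, prismMap_single, Finset.smul_sum]
      refine Finset.sum_congr rfl fun j _ => ?_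
      rw [smul_smul, ← pow_add]
    rw [eA, eB]
    have hcan : (∑ j ∈ range (m + 2), ∑ i ∈ range (m + 3),
          ((-1 : ℤ) ^ (j + i)) • Finsupp.single (natFace i (prism f g σ j)) b)
        + (∑ k ∈ range (m + 2), ∑ j ∈ range (m + 1),
            ((-1 : ℤ) ^ (k + j)) • Finsupp.single (prism f g (natFace k σ) j) b)
        = Finsupp.single (natFace 0 (prism f g σ 0)) b
          - Finsupp.single (natFace (m + 2) (prism f g σ (m + 2))) b :=
      prism_cancel' (M := DChain β (m + 2)) m
        (fun i j => Finsupp.single (natFace i (prism f g σ j)) b)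
        (fun k j => Finsupp.single (prism f g (natFace k σ) j) b)
        (fun i j hij hj => by
          show Finsupp.single (natFace i (prism f g σ j)) b
            = Finsupp.single (prism f g (natFace i σ) (j - 1)) b
          rw [natFace_prism_lt f g σ hij hj])
        (fun i j hij hi _ => by
          show Finsupp.single (natFace i (prism f g σ j)) b
            = Finsupp.single (prism f g (natFace (i - 1) σ) j) b
          rw [natFace_prism_gt f g σ hij hi])
        (fun j hj => by
          show Finsupp.single (natFace (j + 1) (prism f g σ j)) b
            = Finsupp.single (natFace (j + 1) (prism f g σ (j + 1))) b
          rw [natFace_prism_diag f g σ (by omega : j ≤ m + 1)])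
    rw [natFace_prism_zero f g σ, natFace_prism_last f g σ (by omega : m + 1 ≤ m + 2)] at hcan
    exact hcan
  exact LinearMap.congr_fun key c

/-- Let `O' ≪ O` be a super-refinement of open covers of `X`.  Every
`(O',O)`-parent map `f : X → O` (i.e. `f x ∈ O` and `V ⊆ f x` whenever `x ∈ V ∈ O'`)
induces a well-defined chain map `f_* : 𝒞_*(X,O') → C_*(N(O))`,
`[x₀,…,xₙ] ↦ [f x₀,…,f xₙ]`: whenever `{x₀,…,xₙ}` is `O'`-tiny, `f x₀ ∩ … ∩ f xₙ ≠ ∅`,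
`O'`-fine chains go to nerve chains of `O`, and the map commutes with the boundary.
Moreover any two parent maps `f, g` induce chain-homotopic maps. -/
theorem parentMap_chainMap {X : Type*} [TopologicalSpace X] (O' O : Set (Set X))
    (hO' : IsOpenCover O') (hO : IsOpenCover O) (hsr : SuperRefines O' O)
    (f : X → Set X) (hf : ∀ x : X, f x ∈ O ∧ ∀ V ∈ O', x ∈ V → V ⊆ f x) :
    (∀ (m : ℕ) (σ : Fin (m + 1) → X), Tiny O' (Set.range σ) →
      (∀ i, f (σ i) ∈ O) ∧ (⋂ i, f (σ i)).Nonempty) ∧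
    (∀ (m : ℕ) (c : DChain X (m + 1)), FineChain O' c → NerveChain O (vmap f c)) ∧
    (∀ (m : ℕ) (c : DChain X (m + 2)), dbd (vmap f c) = vmap f (dbd c)) ∧
    (∀ g : X → Set X, (∀ x : X, g x ∈ O ∧ ∀ V ∈ O', x ∈ V → V ⊆ g x) →
      ∃ H : ∀ m : ℕ, DChain X (m + 1) →ₗ[ℤ] DChain (Set X) (m + 2),
        (∀ (m : ℕ) (c : DChain X (m + 1)), FineChain O' c → NerveChain O (H m c)) ∧
        (∀ c : DChain X 1, FineChain O' c →
          dbd (H 0 c) = vmap g c - vmap f c) ∧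
        (∀ (m : ℕ) (c : DChain X (m + 2)), FineChain O' c →
          dbd (H (m + 1) c) + H m (dbd c) = vmap g c - vmap f c)) := by
  classical
  have key : ∀ (h : X → Set X), (∀ x : X, h x ∈ O ∧ ∀ V ∈ O', x ∈ V → V ⊆ h x) →
      ∀ (m : ℕ) (σ : Fin (m + 1) → X), Tiny O' (Set.range σ) →
      (∀ i, h (σ i) ∈ O) ∧ (⋂ i, h (σ i)).Nonempty := by
    intro h hh m σ ⟨V, hV, hsub⟩
    have hx : ∀ i, σ i ∈ V := fun i => hsub (Set.mem_range_self i)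
    exact ⟨fun i => (hh (σ i)).1,
      ⟨σ 0, Set.mem_iInter.2 fun i => (hh (σ i)).2 V hV (hx i) (hx 0)⟩⟩
  refine ⟨key f hf, ?_, ?_, ?_⟩
  · -- fine chains map to nerve chains
    intro m c hc τ hτ
    rw [vmap, Finsupp.lmapDomain_apply] at hτ
    obtain ⟨σ, hσ, rfl⟩ := Finset.mem_image.1 (Finsupp.mapDomain_support hτ)
    exact key f hf m σ (hc σ hσ)
  · -- chain map
    intro m c
    have : (dbd.comp (vmap f) : DChain X (m + 2) →ₗ[ℤ] DChain (Set X) (m + 1))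
        = (vmap f).comp dbd := by
      apply Finsupp.lhom_ext
      intro σ b
      rw [LinearMap.comp_apply, LinearMap.comp_apply, vmap_single, dbd_single, dbd_single,
        map_sum]
      refine Finset.sum_congr rfl fun i _ => ?_
      rw [map_smul, vmap_single, natFace_comp]
    exact LinearMap.congr_fun this c
  · -- chain homotopy
    intro g hg
    refine ⟨fun m => prismMap f g m, ?_, fun c _ => prism_homotopy_zero f g c,
      fun m c _ => prism_homotopy f g m c⟩
    intro m c hc τ hτ
    unfold prismMap at hτ
    rw [LinearMap.sum_apply] at hτ
    obtain ⟨j, _, hτj⟩ := Finsupp.mem_support_finset_sum τ hτ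
    rw [LinearMap.smul_apply] at hτj
    have hτj' := Finsupp.support_smul hτj
    rw [Finsupp.lmapDomain_apply] at hτj'
    obtain ⟨σ, hσ, rfl⟩ := Finset.mem_image.1 (Finsupp.mapDomain_support hτj')
    obtain ⟨V, hV, hsub⟩ := hc σ hσ
    have hx : ∀ i, σ i ∈ V := fun i => hsub (Set.mem_range_self i)
    have hval : ∀ i : Fin (m + 2), ∃ t : Fin (m + 1),
        prism f g σ j i = f (σ t) ∨ prism f g σ j i = g (σ t) := by
      intro i
      unfold prism
      split
      · exact ⟨_, Or.inl rfl⟩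
      · exact ⟨_, Or.inr rfl⟩
    constructor
    · intro i
      obtain ⟨t, ht | ht⟩ := hval i
      · rw [ht]; exact (hf (σ t)).1
      · rw [ht]; exact (hg (σ t)).1
    · refine ⟨σ 0, Set.mem_iInter.2 fun i => ?_⟩
      obtain ⟨t, ht | ht⟩ := hval i
      · rw [ht]; exact (hf (σ t)).2 V hV (hx t) (hx 0)
      · rw [ht]; exact (hg (σ t)).2 V hV (hx t) (hx 0)
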